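/- arXiv:1102.0923 — 3 statements merged into one kernel-verified Lean document; each statement's English description precedes it below -/
import Mathlib

section
/- Quadratic convergence of the Newton-type error sequence: under the hypotheses of the abstract fixed point theorem, with s_j = s + 2^(−j)σ and σ_j = s_j − s_{j+1} = 2^(−(j+1))σ, assuming c ≥ 2^(−t), the errors satisfy |y_j|_{s_j} ≤ (c 4^t σ^(−t) |y|_{s+σ})^(2^j) for all j for which the iterates are defined. -/
/-- Quadratic convergence of the Newton-type error sequence: under the hypotheses of the
abstract fixed point theorem, with `s_j = s + 2^{-j} σ`, `σ_j = s_j − s_{j+1} = 2^{-(j+1)} σ`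
and `c ≥ 2^{-t}`, if the iterates `(x_j, y_j) = φ^j(x,y)` are defined (i.e. lie in the balls
`B_{s_{j+1}, σ_j}`), then `|y_j|_{s_j} ≤ (c 4^t σ^{-t} |y|_{s+σ})^(2^j)` for all `j`. -/
theorem newton_iterates_error_bound
    {E F : Type*} [AddCommGroup E] [AddCommGroup F]
    (memE : ℝ → Set E) (memF : ℝ → Set F) (nE : ℝ → E → ℝ) (nF : ℝ → F → ℝ)
    (hnF0 : ∀ s, ∀ y ∈ memF s, 0 ≤ nF s y)
    (C γ τ c t : ℝ) (hC : 0 < C) (hγ : 0 < γ) (hτ : 0 < τ) (hc : 0 < c) (ht : 0 < t)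
    (hct : (2 : ℝ) ^ (-t) ≤ c)
    (φ : E × F → E × F)
    -- quadratic estimate of the operator on each ball `B_{s,σ}`
    (hφ : ∀ s σ : ℝ, 0 < s → 0 < σ → s + σ < 1 →
      ∀ x y, x ∈ memE (s + σ) → y ∈ memF (s + σ) →
        nE (s + σ) x ≤ C → nF (s + σ) y ≤ γ * σ ^ τ →
        (φ (x, y)).1 ∈ memE s ∧ (φ (x, y)).2 ∈ memF s ∧
        nE s ((φ (x, y)).1 - x) ≤ c * σ ^ (-t) * (nF (s + σ) y) ^ 2 ∧
        nF s (φ (x, y)).2 ≤ c * σ ^ (-t) * (nF (s + σ) y) ^ 2)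
    (s σ : ℝ) (hs : 0 < s) (hσ : 0 < σ) (hsσ : s + σ < 1)
    (x : E) (y : F)
    -- the iterates are defined: `(x_j, y_j) ∈ B_{s_{j+1}, σ_j}`
    (hdef : ∀ j : ℕ,
      (φ^[j] (x, y)).1 ∈ memE (s + 2 ^ (-(j : ℝ)) * σ) ∧
      (φ^[j] (x, y)).2 ∈ memF (s + 2 ^ (-(j : ℝ)) * σ) ∧
      nE (s + 2 ^ (-(j : ℝ)) * σ) (φ^[j] (x, y)).1 ≤ C ∧
      nF (s + 2 ^ (-(j : ℝ)) * σ) (φ^[j] (x, y)).2 ≤ γ * ((2 : ℝ) ^ (-(j + 1 : ℝ)) * σ) ^ τ) :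
    ∀ j : ℕ, nF (s + 2 ^ (-(j : ℝ)) * σ) (φ^[j] (x, y)).2 ≤
      (c * (4 : ℝ) ^ t * σ ^ (-t) * nF (s + σ) y) ^ (2 ^ j) := by
  have two_pos : (0:ℝ) < 2 := by norm_num
  set a : ℕ → ℝ := fun j => nF (s + 2 ^ (-(j : ℝ)) * σ) (φ^[j] (x, y)).2 with ha
  set w : ℕ → ℝ := fun j => c * σ ^ (-t) * (2:ℝ) ^ (((j:ℝ)+2)*t) with hw
  have ha0 : a 0 = nF (s + σ) y := by
    simp [ha, Real.rpow_zero]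
  have hann : ∀ j, 0 ≤ a j := fun j => hnF0 _ _ (hdef j).2.1
  have hσ1 : σ < 1 := by linarith
  have hσinv : 1 ≤ σ ^ (-t) := by
    rw [Real.rpow_neg hσ.le]
    exact one_le_inv₀ (Real.rpow_pos_of_pos hσ t) |>.mpr (Real.rpow_le_one hσ.le hσ1.le ht.le)
  have h42 : (4:ℝ) ^ t = (2:ℝ) ^ (2*t) := by
    rw [show (4:ℝ) = (2:ℝ)^(2:ℝ) by
      rw [show (2:ℝ) = ((2:ℕ):ℝ) by norm_num, Real.rpow_natCast]; norm_num,
      ← Real.rpow_mul (by norm_num)]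
  set M : ℝ := c * (4:ℝ) ^ t * σ ^ (-t) * nF (s + σ) y with hM
  have key : ∀ j : ℕ, w j * a j ≤ M ^ (2 ^ j) := by
    intro j
    induction j with
    | zero =>
      apply le_of_eq
      rw [pow_zero, pow_one, hM, ← ha0, h42]
      simp only [hw, Nat.cast_zero, zero_add]
      ring
    | succ j IH =>
      obtain ⟨hxE, hyF, hxC, hyγ⟩ := hdef j
      have hsum : (s + 2 ^ (-((j:ℝ)+1)) * σ) + 2 ^ (-((j:ℝ)+1)) * σ
          = s + 2 ^ (-(j:ℝ)) * σ := by
        have : (2:ℝ) ^ (-(j:ℝ)) = 2 ^ (-((j:ℝ)+1)) * 2 := by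
          rw [← Real.rpow_add_one (by norm_num : (2:ℝ) ≠ 0)]
          ring_nf
        rw [this]; ring
      have hσj : (0:ℝ) < 2 ^ (-((j:ℝ)+1)) * σ := by positivity
      have hcast : (-(j+1 : ℝ)) = -((j:ℝ)+1) := by push_cast; ring
      have H := hφ (s + 2 ^ (-((j:ℝ)+1)) * σ) (2 ^ (-((j:ℝ)+1)) * σ)
        (by positivity) hσj
        (by rw [hsum]; have : (2:ℝ) ^ (-(j:ℝ)) ≤ 1 := by
              apply Real.rpow_le_one_of_one_le_of_nonpos (by norm_num); simp
            nlinarith)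
        (φ^[j] (x, y)).1 (φ^[j] (x, y)).2
        (by rw [hsum]; exact hxE) (by rw [hsum]; exact hyF)
        (by rw [hsum]; exact hxC) (by rw [hsum]; rw [hcast] at hyγ; exact hyγ)
      have hstep : a (j+1) ≤ c * ((2:ℝ) ^ (-((j:ℝ)+1)) * σ) ^ (-t) * (a j) ^ 2 := by
        have := H.2.2.2
        rw [hsum] at this
        have e : (-(((j+1 : ℕ)) : ℝ)) = -((j:ℝ)+1) := by push_cast; ring
        show nF (s + 2 ^ (-(((j+1:ℕ)) : ℝ)) * σ) (φ^[j+1] (x, y)).2 ≤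
          c * ((2:ℝ) ^ (-((j:ℝ)+1)) * σ) ^ (-t) * (nF (s + 2 ^ (-(j:ℝ)) * σ) (φ^[j] (x, y)).2) ^ 2
        rw [e, Function.iterate_succ_apply']; exact this
      have h2 : ((2:ℝ) ^ (-((j:ℝ)+1)) * σ) ^ (-t)
          = (2:ℝ) ^ (((j:ℝ)+1)*t) * σ ^ (-t) := by
        rw [Real.mul_rpow (by positivity) hσ.le, ← Real.rpow_mul (by norm_num)]
        congr 1; ring
      have e1 : (2:ℝ) ^ ((((j:ℝ)+1)+2)*t) * 2 ^ (((j:ℝ)+1)*t)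
          = ((2:ℝ) ^ (((j:ℝ)+2)*t)) ^ 2 := by
        rw [← Real.rpow_add two_pos, sq, ← Real.rpow_add two_pos]
        congr 1; ring
      have hwnn : 0 ≤ w (j+1) := by
        simp only [hw]; positivity
      calc w (j+1) * a (j+1)
          ≤ w (j+1) * (c * ((2:ℝ) ^ (-((j:ℝ)+1)) * σ) ^ (-t) * (a j) ^ 2) :=
            mul_le_mul_of_nonneg_left hstep hwnn
        _ = (w j * a j) ^ 2 := by
            simp only [hw, h2]
            push_cast
            rw [mul_pow, mul_pow, ← e1]; ring
        _ ≤ (M ^ (2 ^ j)) ^ 2 := by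
            exact pow_le_pow_left₀ (mul_nonneg (by simp only [hw]; positivity) (hann j)) IH 2
        _ = M ^ (2 ^ (j+1)) := by rw [← pow_mul, pow_succ]
  intro j
  have hw1 : 1 ≤ w j := by
    have h1 : (2:ℝ) ^ ((2:ℝ)*t) ≤ (2:ℝ) ^ (((j:ℝ)+2)*t) := by
      apply Real.rpow_le_rpow_left_iff (by norm_num : (1:ℝ) < 2) |>.mpr
      nlinarith [Nat.cast_nonneg (α := ℝ) j]
    have h2 : (2:ℝ)^(-t) * (2:ℝ)^((2:ℝ)*t) = 2^t := by
      rw [← Real.rpow_add two_pos]; congr 1; ring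
    have h3 : (1:ℝ) ≤ 2^t := Real.one_le_rpow (by norm_num) ht.le
    have h4 : (0:ℝ) < (2:ℝ)^(-t) := Real.rpow_pos_of_pos two_pos _
    calc (1:ℝ) ≤ 2^(-t) * 1 * (2:ℝ)^((2:ℝ)*t) := by nlinarith
      _ ≤ c * σ ^ (-t) * (2:ℝ) ^ (((j:ℝ)+2)*t) := by
          apply mul_le_mul _ h1 (by positivity) (by positivity)
          apply mul_le_mul hct hσinv (by norm_num) hc.le
      _ = w j := rfl
  calc a j ≤ w j * a j := le_mul_of_one_le_left (hann j) hw1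
    _ ≤ M ^ (2 ^ j) := key j
end

section
/- Quadratic remainder estimate from the linearized equation: suppose H = K + Ḣ, and (K̇, v) solve the linear equation K̇ + DK·v = Ḣ on a domain where all quantities are defined. Then H∘exp(−v) − (K + K̇) = −D(K̇ + DK·v)·v + (∫_0^1 (1−t) D²H∘exp(−tv) dt)·(v,v), i.e., the new error equals −D(Ḣ)·v plus the second-order Taylor remainder; in particular it is quadratic in (Ḣ, v). -/
/-- Quadratic remainder estimate from the linearized equation: if `H = K + Ḣ` and
`(K̇, v)` solve the linear equation `K̇ + DK·v = Ḣ` on the domain, then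
`H∘exp(−v)(x) − (K(x) + K̇(x)) = −D(K̇ + DK·v)(x)·v(x) + ∫₀¹ (1−t) (L_v² H)(exp(−tv)(x)) dt`,
i.e. the new error is `−DḢ·v` plus the second-order Taylor remainder, quadratic in `(Ḣ, v)`. -/
theorem quadratic_remainder_identity {X : Type*} [NormedAddCommGroup X] [NormedSpace ℝ X]
    (U : Set X) (hU : IsOpen U) (H K Kdot Hdot : X → ℝ) (v : X → X)
    (hH : ContDiffOn ℝ 2 H U) (hK : ContDiffOn ℝ 2 K U)
    (hKdot : ContDiffOn ℝ 1 Kdot U) (hv : ContDiffOn ℝ 1 v U)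
    (hHK : ∀ y ∈ U, H y = K y + Hdot y)
    (hlin : ∀ y ∈ U, Kdot y + fderiv ℝ K y (v y) = Hdot y)
    (x : X) (φ : ℝ → X) (hφ0 : φ 0 = x)
    (hφU : ∀ t ∈ Set.Icc (0 : ℝ) 1, φ t ∈ U)
    (hflow : ∀ t ∈ Set.Icc (0 : ℝ) 1, HasDerivAt φ (-(v (φ t))) t) :
    H (φ 1) - (K x + Kdot x) =
      -(fderiv ℝ (fun y => Kdot y + fderiv ℝ K y (v y)) x (v x)) +
      ∫ t in (0 : ℝ)..1, (1 - t) *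
        fderiv ℝ (fun y => fderiv ℝ H y (v y)) (φ t) (v (φ t)) := by
  have hx : x ∈ U := hφ0 ▸ hφU 0 (by norm_num)
  set f : X → ℝ := fun y => fderiv ℝ H y (v y) with hf_def
  -- fderiv H is C¹ on U
  have hDH : ContDiffOn ℝ 1 (fun y => fderiv ℝ H y) U :=
    hH.fderiv_of_isOpen hU (by norm_num)
  have hf : ContDiffOn ℝ 1 f U := hDH.clm_apply hv
  have hfd : DifferentiableOn ℝ f U := hf.differentiableOn (by norm_num)
  have hHd : DifferentiableOn ℝ H U := hH.differentiableOn (by norm_num)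
  have hKd : DifferentiableOn ℝ K U := hK.differentiableOn (by norm_num)
  -- at each t ∈ [0,1], everything is differentiable at φ t
  have key : ∀ t ∈ Set.uIcc (0:ℝ) 1,
      HasDerivAt (fun s => H (φ s) + (1 - s) * (-(f (φ s))))
        ((1 - t) * fderiv ℝ f (φ t) (v (φ t))) t := by
    intro t ht
    rw [Set.uIcc_of_le (by norm_num : (0:ℝ) ≤ 1)] at ht
    have hmem : φ t ∈ U := hφU t ht
    have hφ' := hflow t ht
    have h1 : HasDerivAt (fun s => H (φ s)) (-(f (φ t))) t := by
      have := ((hHd (φ t) hmem).differentiableAt (hU.mem_nhds hmem)).hasFDerivAt.comp_hasDerivAt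
        t hφ'
      convert this using 1
      · rfl
      · rfl
      · rfl
      · rw [map_neg]
    have h2 : HasDerivAt (fun s => f (φ s)) (fderiv ℝ f (φ t) (-(v (φ t)))) t :=
      ((hfd (φ t) hmem).differentiableAt (hU.mem_nhds hmem)).hasFDerivAt.comp_hasDerivAt t hφ'
    have ha : HasDerivAt (fun s : ℝ => (1:ℝ) - s) (-1) t := (hasDerivAt_id t).const_sub 1
    have h4 := h1.add (ha.mul h2.neg)
    convert h4 using 1
    · rfl
    · rfl
    · rfl
    · rw [map_neg, Pi.neg_apply]; ring
  -- continuity of the integrand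
  have hφcont : ContinuousOn φ (Set.Icc (0:ℝ) 1) := fun t ht =>
    (hflow t ht).continuousAt.continuousWithinAt
  have hint : IntervalIntegrable
      (fun t => (1 - t) * fderiv ℝ f (φ t) (v (φ t))) MeasureTheory.volume 0 1 := by
    apply ContinuousOn.intervalIntegrable
    rw [Set.uIcc_of_le (by norm_num : (0:ℝ) ≤ 1)]
    have hDf : ContinuousOn (fun y => fderiv ℝ f y) U :=
      (hf.fderiv_of_isOpen (m := 0) hU (by norm_num)).continuousOn
    have hvc : ContinuousOn v U := hv.continuousOn
    have : ContinuousOn (fun y => fderiv ℝ f y (v y)) U := hDf.clm_apply hvc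
    exact (continuousOn_const.sub continuousOn_id).mul
      ((this.comp hφcont) (fun t ht => hφU t ht))
  have hFTC := intervalIntegral.integral_eq_sub_of_hasDerivAt key hint
  -- evaluate: ∫ = F 1 - F 0
  have hval : (∫ t in (0:ℝ)..1, (1 - t) * fderiv ℝ f (φ t) (v (φ t)))
      = H (φ 1) - (H x + (-(f x))) := by
    rw [hFTC, hφ0]; ring
  -- identify fderiv of Kdot + DK·v with fderiv of H - K at x
  have heqU : (fun y => Kdot y + fderiv ℝ K y (v y)) =ᶠ[nhds x] (fun y => H y - K y) := by
    filter_upwards [hU.mem_nhds hx] with y hy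
    rw [hlin y hy, hHK y hy]; ring
  have hfd_eq : fderiv ℝ (fun y => Kdot y + fderiv ℝ K y (v y)) x
      = fderiv ℝ (fun y => H y - K y) x := heqU.fderiv_eq
  have hHx : DifferentiableAt ℝ H x := (hHd x hx).differentiableAt (hU.mem_nhds hx)
  have hKx : DifferentiableAt ℝ K x := (hKd x hx).differentiableAt (hU.mem_nhds hx)
  have hsub : fderiv ℝ (fun y => H y - K y) x = fderiv ℝ H x - fderiv ℝ K x :=
    fderiv_sub hHx hKx
  have hKdotx : Kdot x = H x - K x - fderiv ℝ K x (v x) := by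
    have := hlin x hx
    have h2 := hHK x hx
    linarith
  rw [hval, hfd_eq, hsub, hKdotx]
  simp [hf_def]
  ring
end

section
/- Convergence of composed near-identity maps: let X be a Banach space and (g_j)_{j≥0} maps on a closed ball B of X with g_j = id + u_j, where each u_j is L_j-Lipschitz with ∑_j L_j ≤ 1/2 and ∑_j sup‖u_j‖ < ∞, and the compositions γ_j = g_0 ∘ g_1 ∘ ⋯ ∘ g_j map a smaller closed ball B' into B. Then (γ_j) is a Cauchy sequence in the sup norm on B' and converges uniformly to a limit γ with sup_{B'} ‖γ − id‖ ≤ 2 ∑_j sup‖u_j‖. -/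
/-- Convergence of composed near-identity maps: if `g_j = id + u_j` on a closed ball `B`,
with `u_j` Lipschitz of constant `L_j`, `∑ L_j ≤ 1/2`, `∑ sup ‖u_j‖ < ∞`, and the
compositions `γ_j = g_0 ∘ ⋯ ∘ g_j` map a smaller closed ball `B'` into `B`, then `(γ_j)`
converges uniformly on `B'` to a limit `γ` with `sup_{B'} ‖γ − id‖ ≤ 2 ∑_j sup ‖u_j‖`. -/
theorem composed_near_identity_maps {X : Type*} [NormedAddCommGroup X] [NormedSpace ℝ X]
    [CompleteSpace X] (x₀ : X) (R R' : ℝ) (hR' : 0 ≤ R') (hRR' : R' ≤ R)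
    (u : ℕ → X → X) (L : ℕ → NNReal) (M : ℕ → ℝ) (hM0 : ∀ j, 0 ≤ M j)
    (hlip : ∀ j, LipschitzOnWith (L j) (u j) (Metric.closedBall x₀ R))
    (hLsum : Summable L ∧ (∑' j, (L j : ℝ)) ≤ 1 / 2)
    (hbound : ∀ j, ∀ y ∈ Metric.closedBall x₀ R, ‖u j y‖ ≤ M j)
    (hMsum : Summable M)
    (g : ℕ → X → X) (hg : ∀ j y, g j y = y + u j y)
    (γ : ℕ → X → X) (hγ0 : γ 0 = g 0) (hγ : ∀ j, γ (j + 1) = γ j ∘ g (j + 1))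
    (hgmaps : ∀ j, Set.MapsTo (g j) (Metric.closedBall x₀ R) (Metric.closedBall x₀ R))
    (hγmaps : ∀ j, Set.MapsTo (γ j) (Metric.closedBall x₀ R') (Metric.closedBall x₀ R)) :
    ∃ γlim : X → X,
      TendstoUniformlyOn (fun j => γ j) γlim Filter.atTop (Metric.closedBall x₀ R') ∧
      ∀ y ∈ Metric.closedBall x₀ R', ‖γlim y - y‖ ≤ 2 * ∑' j, M j := by
  classical
  set B := Metric.closedBall x₀ R with hB
  set B' := Metric.closedBall x₀ R' with hB'
  have hB'B : B' ⊆ B := Metric.closedBall_subset_closedBall hRR'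
  -- each g i is Lipschitz with constant 1 + L i on B
  have hglip : ∀ i, LipschitzOnWith (1 + L i) (g i) B := by
    intro i
    rw [lipschitzOnWith_iff_dist_le_mul]
    intro y hy z hz
    have h1 : dist (u i y) (u i z) ≤ (L i : ℝ) * dist y z := (hlip i).dist_le_mul y hy z hz
    have h2 : dist (g i y) (g i z) ≤ dist y z + dist (u i y) (u i z) := by
      rw [hg, hg]; exact dist_add_add_le _ _ _ _
    have : ((1 + L i : NNReal) : ℝ) = 1 + (L i : ℝ) := by push_cast; ring
    rw [this]; nlinarith [dist_nonneg (x := y) (y := z)]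
  -- Lipschitz constants of the compositions
  set C : ℕ → NNReal := fun j => ∏ i ∈ Finset.range (j + 1), (1 + L i) with hC
  have hγlip : ∀ j, LipschitzOnWith (C j) (γ j) B := by
    intro j
    induction j with
    | zero => simpa [hC, hγ0] using hglip 0
    | succ j ih =>
      have hCe : C (j + 1) = C j * (1 + L (j + 1)) := by
        simp [hC, Finset.prod_range_succ]
      rw [hγ j, hCe]
      exact ih.comp (hglip (j + 1)) (hgmaps (j + 1))
  have hLsumR : Summable (fun j => (L j : ℝ)) := NNReal.summable_coe.2 hLsum.1
  -- the Lipschitz constants are bounded by 2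
  have hC2 : ∀ j, (C j : ℝ) ≤ 2 := by
    intro j
    have h1 : (C j : ℝ) = ∏ i ∈ Finset.range (j + 1), (1 + (L i : ℝ)) := by
      rw [hC]; push_cast; rfl
    have h2 : ∏ i ∈ Finset.range (j + 1), (1 + (L i : ℝ))
        ≤ ∏ i ∈ Finset.range (j + 1), Real.exp (L i) := by
      apply Finset.prod_le_prod
      · intro i _; positivity
      · intro i _; have := Real.add_one_le_exp (L i : ℝ); linarith
    have h3 : ∏ i ∈ Finset.range (j + 1), Real.exp (L i)
        = Real.exp (∑ i ∈ Finset.range (j + 1), (L i : ℝ)) := (Real.exp_sum _ _).symm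
    have h4 : ∑ i ∈ Finset.range (j + 1), (L i : ℝ) ≤ ∑' i, (L i : ℝ) :=
      Summable.sum_le_tsum _ (fun i _ => (L i).coe_nonneg) hLsumR
    have h5 : Real.exp (∑ i ∈ Finset.range (j + 1), (L i : ℝ)) ≤ Real.exp (1 / 2) :=
      Real.exp_le_exp.2 (h4.trans hLsum.2)
    have h6 : Real.exp (1 / 2) ≤ 2 := by
      have he : Real.exp (1 / 2) * Real.exp (1 / 2) = Real.exp 1 := by
        rw [← Real.exp_add]; norm_num
      nlinarith [Real.exp_one_lt_d9, Real.exp_pos (1 / 2 : ℝ)]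
    rw [h1]; linarith
  -- the series of increments
  set f : ℕ → X → X := fun i y => Nat.rec (u 0 y) (fun i _ => γ (i + 1) y - γ i y) i with hf
  have hf0 : ∀ y, f 0 y = u 0 y := fun y => rfl
  have hfs : ∀ i y, f (i + 1) y = γ (i + 1) y - γ i y := fun i y => rfl
  -- telescoping
  have htel : ∀ j y, γ j y - y = ∑ i ∈ Finset.range (j + 1), f i y := by
    intro j y
    induction j with
    | zero => simp [hf0, hγ0, hg]
    | succ j ih =>
      rw [Finset.sum_range_succ, ← ih, hfs]
      abel
  -- bound on the increments
  have hfb : ∀ i, ∀ y ∈ B', ‖f i y‖ ≤ 2 * M i := by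
    intro i y hy
    cases i with
    | zero =>
      rw [hf0]
      have := hbound 0 y (hB'B hy)
      have := hM0 0
      linarith
    | succ i =>
      rw [hfs, hγ i]
      have hyB : y ∈ B := hB'B hy
      have hgyB : g (i + 1) y ∈ B := hgmaps (i + 1) hyB
      have h1 : dist (γ i (g (i + 1) y)) (γ i y) ≤ (C i : ℝ) * dist (g (i + 1) y) y :=
        (hγlip i).dist_le_mul _ hgyB _ hyB
      have h2 : dist (g (i + 1) y) y = ‖u (i + 1) y‖ := by
        rw [hg, dist_eq_norm]; simp
      have h3 : ‖u (i + 1) y‖ ≤ M (i + 1) := hbound (i + 1) y hyB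
      have h4 : dist (g (i + 1) y) y ≥ 0 := dist_nonneg
      have h5 : (C i : ℝ) * dist (g (i + 1) y) y ≤ 2 * M (i + 1) := by
        calc (C i : ℝ) * dist (g (i + 1) y) y ≤ 2 * dist (g (i + 1) y) y := by
              nlinarith [hC2 i, (C i).coe_nonneg]
          _ ≤ 2 * M (i + 1) := by rw [h2]; linarith
      calc ‖γ i (g (i + 1) y) - γ i y‖ = dist (γ i (g (i + 1) y)) (γ i y) :=
            (dist_eq_norm _ _).symm
        _ ≤ 2 * M (i + 1) := h1.trans h5
  have hMsum2 : Summable (fun i => 2 * M i) := hMsum.mul_left 2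
  -- Weierstrass M-test
  have hunif : TendstoUniformlyOn (fun N y => ∑ i ∈ Finset.range N, f i y)
      (fun y => ∑' i, f i y) Filter.atTop B' :=
    tendstoUniformlyOn_tsum_nat hMsum2 (fun n x hx => hfb n x hx)
  refine ⟨fun y => y + ∑' i, f i y, ?_, ?_⟩
  · rw [Metric.tendstoUniformlyOn_iff]
    intro ε hε
    rw [Metric.tendstoUniformlyOn_iff] at hunif
    have h := hunif ε hε
    have h' := (Filter.tendsto_add_atTop_nat 1).eventually h
    filter_upwards [h'] with j hj y hy
    have hd := hj y hy
    have heq : γ j y = y + ∑ i ∈ Finset.range (j + 1), f i y := by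
      have h := htel j y
      rw [sub_eq_iff_eq_add] at h
      rw [h]; abel
    calc dist (y + ∑' i, f i y) (γ j y)
        = dist (∑' i, f i y) (∑ i ∈ Finset.range (j + 1), f i y) := by
          rw [heq, dist_add_left]
      _ < ε := hd
  · intro y hy
    have hs : ‖∑' i, f i y‖ ≤ ∑' i, 2 * M i :=
      tsum_of_norm_bounded hMsum2.hasSum (fun i => hfb i y hy)
    have ht : ∑' i, 2 * M i = 2 * ∑' i, M i := by
      rw [tsum_mul_left]
    simp only [add_sub_cancel_left]
    rw [← ht]; exact hs
end
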